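/- For MV-Sketch with r = log₂(1/δ) rows and w = 2/ε columns using independent pairwise-independent hash functions per row, for any flow x, the query estimate satisfies Ŝ(x) ≤ S(x) + εS/2 with probability at least 1 − δ. -/

import Mathlib

/-- State of a bucket in MV-Sketch: total value `V`, candidate key `K`,
indicator counter `C`. -/
structure Bucket (α : Type*) where
  V : ℝ
  K : α
  C : ℝ

/-- One update of the generalized majority vote algorithm on input `(y, v)`. -/
noncomputable def Bucket.step {α : Type*} [DecidableEq α] (b : Bucket α) (p : α × ℝ) :
    Bucket α :=
  if p.1 = b.K then ⟨b.V + p.2, b.K, b.C + p.2⟩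
  else if b.C - p.2 < 0 then ⟨b.V + p.2, p.1, p.2 - b.C⟩
  else ⟨b.V + p.2, b.K, b.C - p.2⟩

/-- State of the bucket after processing the whole stream `l`, starting from
an arbitrary initial key `k0`, `V = 0`, `C = 0`. -/
noncomputable def runBucket {α : Type*} [DecidableEq α] (k0 : α) (l : List (α × ℝ)) :
    Bucket α :=
  l.foldl Bucket.step ⟨0, k0, 0⟩

/-- Total value of flow `x` in the stream `l`. -/
def flowSum {α : Type*} [DecidableEq α] (x : α) (l : List (α × ℝ)) : ℝ :=
  ((l.filter fun p => p.1 = x).map Prod.snd).sum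

open MeasureTheory ProbabilityTheory
open scoped ENNReal

section Det
set_option linter.unusedSectionVars false
variable {α : Type*} [DecidableEq α]

lemma Bucket.step_V (b : Bucket α) (p : α × ℝ) : (b.step p).V = b.V + p.2 := by
  unfold Bucket.step; split_ifs <;> rfl

lemma foldl_step_V (l : List (α × ℝ)) (b : Bucket α) :
    (l.foldl Bucket.step b).V = b.V + (l.map Prod.snd).sum := by
  induction l generalizing b with
  | nil => simp
  | cons p l ih => rw [List.foldl_cons, ih, Bucket.step_V]; simp; ring

lemma flowSum_cons (x : α) (p : α × ℝ) (l : List (α × ℝ)) :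
    flowSum x (p :: l) = (if p.1 = x then p.2 else 0) + flowSum x l := by
  by_cases h : p.1 = x <;> simp [flowSum, List.filter_cons, h]

lemma sum_snd_nonneg (l : List (α × ℝ)) (hv : ∀ p ∈ l, 0 ≤ p.2) :
    0 ≤ (l.map Prod.snd).sum := by
  induction l with
  | nil => simp
  | cons p l ih =>
    have := hv p (List.mem_cons_self)
    have := ih fun q hq => hv q (List.mem_cons_of_mem _ hq)
    simp only [List.map_cons, List.sum_cons]; linarith

lemma sum_map_filter_add (c : α × ℝ → Prop) [DecidablePred c] (l : List (α × ℝ)) :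
    ((l.filter fun p => c p).map Prod.snd).sum
      + ((l.filter fun p => ¬ c p).map Prod.snd).sum = (l.map Prod.snd).sum := by
  induction l with
  | nil => simp
  | cons p l ih =>
    by_cases h : c p <;> simp [List.filter_cons, h, decide_not] at ih ⊢ <;> linarith

lemma sum_filter_le (c : α × ℝ → Prop) [DecidablePred c] (l : List (α × ℝ))
    (hv : ∀ p ∈ l, 0 ≤ p.2) :
    ((l.filter fun p => c p).map Prod.snd).sum ≤ (l.map Prod.snd).sum := by
  have h := sum_map_filter_add c l
  have h2 : 0 ≤ ((l.filter fun p => ¬ c p).map Prod.snd).sum :=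
    sum_snd_nonneg _ fun p hp => hv p (List.mem_of_mem_filter hp)
  linarith

lemma flowSum_nonneg (x : α) (l : List (α × ℝ)) (hv : ∀ p ∈ l, 0 ≤ p.2) :
    0 ≤ flowSum x l :=
  sum_snd_nonneg _ fun p hp => hv p (List.mem_of_mem_filter hp)

lemma filter_filter_of_imp (c q : α × ℝ → Prop) [DecidablePred c] [DecidablePred q]
    (h : ∀ p, q p → c p) (l : List (α × ℝ)) :
    (l.filter fun p => c p).filter (fun p => q p) = l.filter fun p => q p := by
  induction l with
  | nil => rfl
  | cons p l ih =>
    by_cases hq : q p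
    · have hc := h p hq
      simp [List.filter_cons, hq, hc, ih]
    · by_cases hc : c p <;> simp [List.filter_cons, hq, hc, ih]

lemma filter_comm' (c q : α × ℝ → Prop) [DecidablePred c] [DecidablePred q]
    (l : List (α × ℝ)) :
    (l.filter fun p => c p).filter (fun p => q p)
      = (l.filter fun p => q p).filter (fun p => c p) := by
  induction l with
  | nil => rfl
  | cons p l ih =>
    by_cases hq : q p <;> by_cases hc : c p <;> simp [List.filter_cons, hq, hc, ih]

lemma sum_map_filter_eq_ite (c : α × ℝ → Prop) [DecidablePred c] (l : List (α × ℝ)) :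
    ((l.filter fun p => c p).map Prod.snd).sum
      = (l.map fun p => if c p then p.2 else 0).sum := by
  induction l with
  | nil => rfl
  | cons p l ih => by_cases h : c p <;> simp [List.filter_cons, h, ih]

lemma foldl_step_inv (x : α) (l : List (α × ℝ)) (hv : ∀ p ∈ l, 0 ≤ p.2)
    (b : Bucket α) (a : ℝ) (ha : 0 ≤ a) (hC : 0 ≤ b.C) (hK : b.K = x → b.C ≤ a) :
    0 ≤ (l.foldl Bucket.step b).C ∧
      ((l.foldl Bucket.step b).K = x → (l.foldl Bucket.step b).C ≤ a + flowSum x l) := by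
  induction l generalizing b a with
  | nil =>
    refine ⟨hC, fun h => ?_⟩
    have : flowSum x (List.nil (α := α × ℝ)) = 0 := rfl
    have := hK h
    simp only [List.foldl_nil] at *
    linarith
  | cons p l ih =>
    have hp2 : 0 ≤ p.2 := hv p (List.mem_cons_self)
    have hv' : ∀ q ∈ l, 0 ≤ q.2 := fun q hq => hv q (List.mem_cons_of_mem _ hq)
    rw [List.foldl_cons]
    have key : 0 ≤ (b.step p).C ∧
        ((b.step p).K = x → (b.step p).C ≤ a + (if p.1 = x then p.2 else 0)) := by
      by_cases h1 : p.1 = b.K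
      · simp only [Bucket.step, if_pos h1]
        refine ⟨by linarith, fun hKx => ?_⟩
        have hb := hK hKx
        have hpx : p.1 = x := h1.trans hKx
        rw [if_pos hpx]; linarith
      · by_cases h2 : b.C - p.2 < 0
        · simp only [Bucket.step, if_neg h1, if_pos h2]
          refine ⟨by linarith, fun hKx => ?_⟩
          rw [if_pos hKx]; linarith
        · simp only [Bucket.step, if_neg h1, if_neg h2]
          refine ⟨by linarith, fun hKx => ?_⟩
          have hb := hK hKx
          have hpx : ¬ p.1 = x := fun h => h1 (h.trans hKx.symm)
          rw [if_neg hpx]; linarith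
    have ha' : 0 ≤ a + (if p.1 = x then p.2 else 0) := by split_ifs <;> linarith
    have hres := ih hv' (b.step p) (a + (if p.1 = x then p.2 else 0)) ha' key.1 key.2
    refine ⟨hres.1, fun h => ?_⟩
    have := hres.2 h
    rw [flowSum_cons]
    linarith

lemma est_le (x k0 : α) (l : List (α × ℝ)) (hv : ∀ p ∈ l, 0 ≤ p.2) :
    (if (runBucket k0 l).K = x then ((runBucket k0 l).V + (runBucket k0 l).C) / 2
      else ((runBucket k0 l).V - (runBucket k0 l).C) / 2)
      ≤ flowSum x l + ((l.map Prod.snd).sum - flowSum x l) / 2 := by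
  have hV : (runBucket k0 l).V = (l.map Prod.snd).sum := by
    have := foldl_step_V l (⟨0, k0, 0⟩ : Bucket α)
    simpa [runBucket] using this
  obtain ⟨hC0, hCK⟩ :=
    foldl_step_inv x l hv (⟨0, k0, 0⟩ : Bucket α) 0 le_rfl le_rfl (fun _ => le_rfl)
  have hfs : 0 ≤ flowSum x l := flowSum_nonneg x l hv
  rw [runBucket] at *
  split_ifs with h
  · have := hCK h
    rw [hV]
    linarith
  · rw [hV]
    linarith

end Det

section Prob
variable {Ω : Type*} [MeasurableSpace Ω] {μ : Measure Ω}

lemma nullOfPartition [IsProbabilityMeasure μ]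
    {ι : Type*} [Fintype ι] (D : ι → Set Ω)
    (hcov : ∀ ω, ∃ i, ω ∈ D i)
    (hsum : ∑ i, μ (D i) = 1) (i : ι) : NullMeasurableSet (D i) μ := by
  classical
  choose t hsub ht hmeq using fun m => MeasureTheory.exists_measurable_superset μ (D m)
  have htsum : ∑ m, μ (t m) = 1 := by
    rw [← hsum]; exact Finset.sum_congr rfl fun m _ => hmeq m
  have hnull : ∀ j k, j ≠ k → μ (t j ∩ t k) = 0 := by
    intro j k hjk
    set s : Finset ι := (Finset.univ.erase j).erase k with hs
    have hcover : (Set.univ : Set Ω) ⊆ (t j ∪ t k) ∪ ⋃ m ∈ s, t m := by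
      intro ω _
      obtain ⟨m, hm⟩ := hcov ω
      by_cases hmj : m = j
      · exact Or.inl (Or.inl (hsub j (hmj ▸ hm)))
      · by_cases hmk : m = k
        · exact Or.inl (Or.inr (hsub k (hmk ▸ hm)))
        · exact Or.inr (Set.mem_iUnion₂.mpr ⟨m, by simp [hs, hmj, hmk], hsub m hm⟩)
    have h1 : (1 : ℝ≥0∞) ≤ μ (t j ∪ t k) + ∑ m ∈ s, μ (t m) := by
      calc (1 : ℝ≥0∞) = μ Set.univ := measure_univ.symm
        _ ≤ μ ((t j ∪ t k) ∪ ⋃ m ∈ s, t m) := measure_mono hcover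
        _ ≤ μ (t j ∪ t k) + μ (⋃ m ∈ s, t m) := measure_union_le _ _
        _ ≤ _ := by
            gcongr
            exact measure_biUnion_finset_le _ _
    have h2 : μ (t j ∪ t k) + μ (t j ∩ t k) = μ (t j) + μ (t k) :=
      measure_union_add_inter _ (ht k)
    have h3 : μ (t j) + (μ (t k) + ∑ m ∈ s, μ (t m)) = 1 := by
      rw [← htsum, hs,
        ← Finset.add_sum_erase Finset.univ (fun m => μ (t m)) (Finset.mem_univ j),
        ← Finset.add_sum_erase (Finset.univ.erase j) (fun m => μ (t m))
          (show k ∈ Finset.univ.erase j by simp [hjk.symm])]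
    have h4 : 1 + μ (t j ∩ t k) ≤ 1 + 0 := by
      calc 1 + μ (t j ∩ t k)
          ≤ (μ (t j ∪ t k) + ∑ m ∈ s, μ (t m)) + μ (t j ∩ t k) := by gcongr
        _ = (μ (t j ∪ t k) + μ (t j ∩ t k)) + ∑ m ∈ s, μ (t m) := by ring
        _ = (μ (t j) + μ (t k)) + ∑ m ∈ s, μ (t m) := by rw [h2]
        _ = 1 := by rw [← h3]; ring
        _ = 1 + 0 := by rw [add_zero]
    have h5 : μ (t j ∩ t k) ≤ 0 := ENNReal.le_of_add_le_add_left (by simp) h4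
    exact le_antisymm h5 zero_le
  refine (ht i).nullMeasurableSet.congr ?_
  rw [MeasureTheory.ae_eq_set]
  constructor
  · have hsub2 : t i \ D i ⊆ ⋃ m ∈ Finset.univ.erase i, (t i ∩ t m) := by
      intro ω ⟨hωt, hωD⟩
      obtain ⟨m, hm⟩ := hcov ω
      have hmi : m ≠ i := fun h => hωD (h ▸ hm)
      exact Set.mem_iUnion₂.mpr ⟨m, by simp [hmi], ⟨hωt, hsub m hm⟩⟩
    refine measure_mono_null hsub2 ?_
    refine le_antisymm (le_trans (measure_biUnion_finset_le _ _) ?_) zero_le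
    rw [Finset.sum_eq_zero]
    intro m hm
    exact hnull i m (fun h => (Finset.mem_erase.mp hm).1 h.symm)
  · rw [Set.diff_eq_empty.mpr (hsub i), measure_empty]

lemma aem_list_sum (μ : Measure Ω) (fs : List (Ω → ℝ≥0∞)) (h : ∀ f ∈ fs, AEMeasurable f μ) :
    AEMeasurable (fun ω => (fs.map fun f => f ω).sum) μ := by
  induction fs with
  | nil => simpa using aemeasurable_const
  | cons f fs ih =>
    simp only [List.map_cons, List.sum_cons]
    exact (h f (List.mem_cons_self)).add (ih fun q hq => h q (List.mem_cons_of_mem _ hq))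

lemma lintegral_list_sum (μ : Measure Ω) (fs : List (Ω → ℝ≥0∞))
    (h : ∀ f ∈ fs, AEMeasurable f μ) :
    ∫⁻ ω, (fs.map fun f => f ω).sum ∂μ = (fs.map fun f => ∫⁻ ω, f ω ∂μ).sum := by
  induction fs with
  | nil => simp
  | cons f fs ih =>
    simp only [List.map_cons, List.sum_cons]
    rw [lintegral_add_left' (h f (List.mem_cons_self))]
    rw [ih fun q hq => h q (List.mem_cons_of_mem _ hq)]

lemma aem_indicator_const {s : Set Ω} (hs : NullMeasurableSet s μ) (c : ℝ≥0∞) :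
    AEMeasurable (s.indicator fun _ => c) μ := by
  have hae : s =ᵐ[μ] MeasureTheory.toMeasurable μ s := hs.toMeasurable_ae_eq.symm
  refine ⟨(MeasureTheory.toMeasurable μ s).indicator fun _ => c,
    measurable_const.indicator (measurableSet_toMeasurable μ s), ?_⟩
  exact indicator_ae_eq_of_ae_eq_set hae

lemma measurableSet_all {n w : ℕ} (s : Set (Fin n → Fin w)) : MeasurableSet s :=
  (Set.toFinite s).measurableSet

end Prob

/-- The row estimate of flow `x` produced by one row of the sketch whose hash
function is `h`. -/
noncomputable def rowEst {n w : ℕ} (k0 x : Fin n) (l : List (Fin n × ℝ))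
    (h : Fin n → Fin w) : ℝ :=
  if (runBucket k0 (l.filter fun p => h p.1 = h x)).K = x then
    ((runBucket k0 (l.filter fun p => h p.1 = h x)).V +
      (runBucket k0 (l.filter fun p => h p.1 = h x)).C) / 2
  else
    ((runBucket k0 (l.filter fun p => h p.1 = h x)).V -
      (runBucket k0 (l.filter fun p => h p.1 = h x)).C) / 2

lemma sum_ofReal_map {β : Type*} (l : List β) (f : β → ℝ) (h : ∀ p ∈ l, 0 ≤ f p) :
    (l.map fun p => ENNReal.ofReal (f p)).sum = ENNReal.ofReal ((l.map f).sum) := by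
  induction l with
  | nil => simp
  | cons p l ih =>
    have h0 := h p (List.mem_cons_self)
    have hrest : 0 ≤ (l.map f).sum := by
      apply List.sum_nonneg
      intro a ha
      obtain ⟨q, hq, rfl⟩ := List.mem_map.mp ha
      exact h q (List.mem_cons_of_mem _ hq)
    simp only [List.map_cons, List.sum_cons, ih (fun q hq => h q (List.mem_cons_of_mem _ hq))]
    rw [ENNReal.ofReal_add h0 hrest]

lemma sum_map_mul_const {β : Type*} (l : List β) (f : β → ℝ≥0∞) (c : ℝ≥0∞) :
    (l.map fun p => f p * c).sum = (l.map f).sum * c := by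
  induction l with
  | nil => simp
  | cons p l ih => simp only [List.map_cons, List.sum_cons, ih, add_mul]


/-- Point-query error bound of MV-Sketch. With `r = log₂(1/δ)` rows of
`w = 2/ε` buckets, mutually independent rows, and a pairwise-independent
uniform hash function per row, for any flow `x` the query estimate (the
minimum over rows of the row estimates) satisfies
`Ŝ(x) ≤ S(x) + ε𝒮/2` with probability at least `1 − δ`, where `𝒮` is the
total sum of all values in the stream. -/
theorem point_query_error_bound {Ω : Type*} [MeasurableSpace Ω]
    (μ : Measure Ω) [IsProbabilityMeasure μ]
    (n r w : ℕ) (hr : 0 < r) (hw : 0 < w)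
    (ε δ : ℝ) (hε0 : 0 < ε) (hε1 : ε < 1)
    (hδ : δ = (1 / 2 : ℝ) ^ r) (hwε : (w : ℝ) = 2 / ε)
    (l : List (Fin n × ℝ)) (hv : ∀ p ∈ l, 0 ≤ p.2) (k0 x : Fin n)
    (g : Ω → Fin r → Fin n → Fin w)
    (hrows : iIndepFun (fun i ω => g ω i) μ)
    (huniform : ∀ i y j, μ {ω | g ω i y = j} = ENNReal.ofReal (1 / (w : ℝ)))
    (hpair : ∀ (i : Fin r) (y z : Fin n), y ≠ z → ∀ j j',
      μ {ω | g ω i y = j ∧ g ω i z = j'} =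
        μ {ω | g ω i y = j} * μ {ω | g ω i z = j'}) :
    haveI : Nonempty (Fin r) := Fin.pos_iff_nonempty.mp hr
    ENNReal.ofReal (1 - δ) ≤
      μ {ω |
        Finset.univ.inf' Finset.univ_nonempty (fun i : Fin r =>
          if (runBucket k0 (l.filter fun p => g ω i p.1 = g ω i x)).K = x then
            ((runBucket k0 (l.filter fun p => g ω i p.1 = g ω i x)).V +
              (runBucket k0 (l.filter fun p => g ω i p.1 = g ω i x)).C) / 2
          else
            ((runBucket k0 (l.filter fun p => g ω i p.1 = g ω i x)).V -
              (runBucket k0 (l.filter fun p => g ω i p.1 = g ω i x)).C) / 2)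
          ≤ flowSum x l + ε * (l.map Prod.snd).sum / 2} := by
  classical
  haveI hne : Nonempty (Fin r) := Fin.pos_iff_nonempty.mp hr
  show ENNReal.ofReal (1 - δ) ≤
      μ {ω | Finset.univ.inf' Finset.univ_nonempty
          (fun i : Fin r => rowEst k0 x l (g ω i))
        ≤ flowSum x l + ε * (l.map Prod.snd).sum / 2}
  set S : ℝ := (l.map Prod.snd).sum with hSdef
  have hS0 : 0 ≤ S := sum_snd_nonneg l hv
  set T : Set Ω := {ω | Finset.univ.inf' Finset.univ_nonempty
      (fun i : Fin r => rowEst k0 x l (g ω i)) ≤ flowSum x l + ε * S / 2} with hT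
  -- the deterministic per-row bound
  have detbound : ∀ h : Fin n → Fin w,
      rowEst k0 x l h ≤ flowSum x l +
        (((l.filter fun p => ¬(p.1 = x)).filter fun p => h p.1 = h x).map Prod.snd).sum / 2 := by
    intro h
    have hv' : ∀ p ∈ (l.filter fun p => h p.1 = h x), 0 ≤ p.2 :=
      fun p hp => hv p (List.mem_of_mem_filter hp)
    have h1 : rowEst k0 x l h ≤ flowSum x (l.filter fun p => h p.1 = h x) +
        (((l.filter fun p => h p.1 = h x).map Prod.snd).sum
          - flowSum x (l.filter fun p => h p.1 = h x)) / 2 :=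
      est_le x k0 (l.filter fun p => h p.1 = h x) hv'
    have e1 : ((l.filter fun p => h p.1 = h x).filter fun p => p.1 = x)
        = l.filter fun p => p.1 = x :=
      filter_filter_of_imp _ _ (fun p hp => by rw [hp]) l
    have h2 : flowSum x (l.filter fun p => h p.1 = h x) = flowSum x l := by
      show (((l.filter fun p => h p.1 = h x).filter fun p => p.1 = x).map Prod.snd).sum
        = ((l.filter fun p => p.1 = x).map Prod.snd).sum
      rw [e1]
    have hsplit := sum_map_filter_add (fun p => p.1 = x) (l.filter fun p => h p.1 = h x)
    have e2 : ((l.filter fun p => h p.1 = h x).filter fun p => ¬ p.1 = x)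
        = (l.filter fun p => ¬(p.1 = x)).filter fun p => h p.1 = h x :=
      filter_comm' _ _ l
    rw [e1, e2] at hsplit
    have h3 : ((l.filter fun p => h p.1 = h x).map Prod.snd).sum
        = flowSum x l
          + (((l.filter fun p => ¬(p.1 = x)).filter fun p => h p.1 = h x).map Prod.snd).sum := by
      have : flowSum x l = ((l.filter fun p => p.1 = x).map Prod.snd).sum := rfl
      rw [this, ← hsplit]
    rw [h2, h3] at h1
    linarith
  by_cases hScase : S = 0
  · -- degenerate case: the stream has total value zero
    have hTuniv : T = Set.univ := by
      ext ω
      simp only [hT, Set.mem_setOf_eq, Set.mem_univ, iff_true]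
      obtain ⟨i0⟩ := hne
      refine le_trans (Finset.inf'_le _ (Finset.mem_univ i0)) ?_
      have hd := detbound (g ω i0)
      have t1 : (((l.filter fun p => ¬(p.1 = x)).filter
            fun p => g ω i0 p.1 = g ω i0 x).map Prod.snd).sum
          ≤ ((l.filter fun p => ¬(p.1 = x)).map Prod.snd).sum :=
        sum_filter_le _ _ (fun p hp => hv p (List.mem_of_mem_filter hp))
      have t2 : ((l.filter fun p => ¬(p.1 = x)).map Prod.snd).sum ≤ S :=
        sum_filter_le _ l hv
      have hεS : ε * S / 2 = 0 := by rw [hScase]; ring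
      rw [hεS]
      linarith
    rw [hTuniv, measure_univ]
    refine ENNReal.ofReal_le_one.mpr ?_
    rw [hδ]
    have : (0:ℝ) ≤ (1/2 : ℝ) ^ r := by positivity
    linarith
  · have hSpos : 0 < S := lt_of_le_of_ne hS0 (Ne.symm hScase)
    have hwR : (0:ℝ) < (w:ℝ) := Nat.cast_pos.mpr hw
    have hw1 : ENNReal.ofReal (1 / (w:ℝ)) = ((w:ℕ) : ℝ≥0∞)⁻¹ := by
      rw [one_div, ENNReal.ofReal_inv_of_pos hwR, ENNReal.ofReal_natCast]
    have hwern0 : ((w:ℕ):ℝ≥0∞) ≠ 0 := Nat.cast_ne_zero.mpr hw.ne'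
    have hwtop : ((w:ℕ):ℝ≥0∞) ≠ ⊤ := ENNReal.natCast_ne_top w
    set tE : ℝ≥0∞ := ENNReal.ofReal (ε * S) with htE
    have htE0 : tE ≠ 0 := by
      rw [htE, Ne, ENNReal.ofReal_eq_zero, not_le]
      positivity
    -- the per-row failure bound
    have key : ∀ i : Fin r,
        μ ((fun ω => g ω i) ⁻¹'
            {h : Fin n → Fin w | flowSum x l + ε * S / 2 < rowEst k0 x l h}) ≤ 2⁻¹ := by
      intro i
      -- null-measurability and measure bound for collision events
      have hsum1 : ∀ (y : Fin n), y ≠ x →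
          ∑ jj : Fin w × Fin w, μ {ω | g ω i y = jj.1 ∧ g ω i x = jj.2} = 1 := by
        intro y hy
        have hval : ∀ jj : Fin w × Fin w,
            μ {ω | g ω i y = jj.1 ∧ g ω i x = jj.2} = ((w:ℕ):ℝ≥0∞)⁻¹ * ((w:ℕ):ℝ≥0∞)⁻¹ :=
          fun jj => by rw [hpair i y x hy jj.1 jj.2, huniform, huniform, hw1]
        rw [Finset.sum_congr rfl fun jj _ => hval jj, Finset.sum_const, Finset.card_univ,
          nsmul_eq_mul]
        have hcard : (Fintype.card (Fin w × Fin w) : ℝ≥0∞) = ((w:ℕ):ℝ≥0∞) * ((w:ℕ):ℝ≥0∞) := by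
          simp [Fintype.card_prod]
        rw [hcard]
        calc ((w:ℕ):ℝ≥0∞) * ((w:ℕ):ℝ≥0∞) * (((w:ℕ):ℝ≥0∞)⁻¹ * ((w:ℕ):ℝ≥0∞)⁻¹)
            = (((w:ℕ):ℝ≥0∞) * ((w:ℕ):ℝ≥0∞)⁻¹) * (((w:ℕ):ℝ≥0∞) * ((w:ℕ):ℝ≥0∞)⁻¹) := by ring
          _ = 1 := by rw [ENNReal.mul_inv_cancel hwern0 hwtop, one_mul]
      have hcovP : ∀ (y : Fin n) (ω : Ω), ∃ jj : Fin w × Fin w,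
          ω ∈ {ω | g ω i y = jj.1 ∧ g ω i x = jj.2} :=
        fun y ω => ⟨(g ω i y, g ω i x), ⟨rfl, rfl⟩⟩
      have hPn : ∀ (y : Fin n), y ≠ x → ∀ jj : Fin w × Fin w,
          NullMeasurableSet {ω | g ω i y = jj.1 ∧ g ω i x = jj.2} μ :=
        fun y hy jj => nullOfPartition _ (hcovP y) (hsum1 y hy) jj
      have hcollU : ∀ y : Fin n,
          {ω | g ω i y = g ω i x} = ⋃ j : Fin w, {ω | g ω i y = j ∧ g ω i x = j} := by
        intro y; ext ω
        simp only [Set.mem_setOf_eq, Set.mem_iUnion]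
        constructor
        · intro hcol; exact ⟨g ω i x, hcol, rfl⟩
        · rintro ⟨j, h1, h2⟩; rw [h1, h2]
      have hcoll_null : ∀ y : Fin n, y ≠ x →
          NullMeasurableSet {ω | g ω i y = g ω i x} μ := by
        intro y hy
        rw [hcollU y]
        exact NullMeasurableSet.iUnion fun j => hPn y hy (j, j)
      have hcoll_meas : ∀ y : Fin n, y ≠ x →
          μ {ω | g ω i y = g ω i x} ≤ ((w:ℕ):ℝ≥0∞)⁻¹ := by
        intro y hy
        rw [hcollU y]
        refine le_trans (measure_iUnion_le _) (le_of_eq ?_)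
        have hval : ∀ j : Fin w,
            μ {ω | g ω i y = j ∧ g ω i x = j} = ((w:ℕ):ℝ≥0∞)⁻¹ * ((w:ℕ):ℝ≥0∞)⁻¹ :=
          fun j => by rw [hpair i y x hy j j, huniform, huniform, hw1]
        calc ∑' j : Fin w, μ {ω | g ω i y = j ∧ g ω i x = j}
            = ∑ j : Fin w, μ {ω | g ω i y = j ∧ g ω i x = j} := tsum_fintype _
          _ = ∑ _j : Fin w, ((w:ℕ):ℝ≥0∞)⁻¹ * ((w:ℕ):ℝ≥0∞)⁻¹ :=
              Finset.sum_congr rfl fun j _ => hval j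
          _ = ((w:ℕ):ℝ≥0∞) * (((w:ℕ):ℝ≥0∞)⁻¹ * ((w:ℕ):ℝ≥0∞)⁻¹) := by
              rw [Finset.sum_const, Finset.card_univ, Fintype.card_fin, nsmul_eq_mul]
          _ = ((w:ℕ):ℝ≥0∞)⁻¹ := by
              rw [← mul_assoc, ENNReal.mul_inv_cancel hwern0 hwtop, one_mul]
      have hl'' : ∀ p ∈ (l.filter fun p => ¬(p.1 = x)), p.1 ≠ x ∧ 0 ≤ p.2 := by
        intro p hp
        have hmem := List.mem_filter.mp hp
        exact ⟨by simpa using hmem.2, hv p hmem.1⟩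
      set fs : List (Ω → ℝ≥0∞) := (l.filter fun p => ¬(p.1 = x)).map fun p =>
        Set.indicator {ω | g ω i p.1 = g ω i x} (fun _ => ENNReal.ofReal p.2) with hfs
      have hfsaem : ∀ f ∈ fs, AEMeasurable f μ := by
        intro f hf
        rw [hfs] at hf
        obtain ⟨p, hp, rfl⟩ := List.mem_map.mp hf
        exact aem_indicator_const (hcoll_null p.1 (hl'' p hp).1) _
      have hZaem : AEMeasurable (fun ω => (fs.map fun f => f ω).sum) μ :=
        aem_list_sum μ fs hfsaem
      have hZint : ∫⁻ ω, (fs.map fun f => f ω).sum ∂μ ≤ ENNReal.ofReal S * ((w:ℕ):ℝ≥0∞)⁻¹ := by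
        rw [lintegral_list_sum μ fs hfsaem, hfs, List.map_map]
        have he : ∀ p ∈ (l.filter fun p => ¬(p.1 = x)),
            ((fun f => ∫⁻ ω, f ω ∂μ) ∘ fun p : Fin n × ℝ =>
              Set.indicator {ω | g ω i p.1 = g ω i x} (fun _ => ENNReal.ofReal p.2)) p
            = ENNReal.ofReal p.2 * μ {ω | g ω i p.1 = g ω i x} := by
          intro p hp
          exact lintegral_indicator_const₀ (hcoll_null p.1 (hl'' p hp).1) _
        rw [List.map_congr_left he]
        calc ((l.filter fun p => ¬(p.1 = x)).map fun p =>
              ENNReal.ofReal p.2 * μ {ω | g ω i p.1 = g ω i x}).sum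
            ≤ ((l.filter fun p => ¬(p.1 = x)).map fun p =>
              ENNReal.ofReal p.2 * ((w:ℕ):ℝ≥0∞)⁻¹).sum := by
              apply List.sum_le_sum
              intro p hp
              exact mul_le_mul_right (hcoll_meas p.1 (hl'' p hp).1) _
          _ = ((l.filter fun p => ¬(p.1 = x)).map fun p => ENNReal.ofReal p.2).sum
              * ((w:ℕ):ℝ≥0∞)⁻¹ := sum_map_mul_const _ _ _
          _ = ENNReal.ofReal (((l.filter fun p => ¬(p.1 = x)).map Prod.snd).sum)
              * ((w:ℕ):ℝ≥0∞)⁻¹ := by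
              rw [sum_ofReal_map _ Prod.snd (fun p hp => (hl'' p hp).2)]
          _ ≤ ENNReal.ofReal S * ((w:ℕ):ℝ≥0∞)⁻¹ := by
              gcongr
              exact sum_filter_le _ l hv
      have hZeq : ∀ ω : Ω, (fs.map fun f => f ω).sum
          = ENNReal.ofReal ((((l.filter fun p => ¬(p.1 = x)).filter
              fun p => g ω i p.1 = g ω i x).map Prod.snd).sum) := by
        intro ω
        rw [sum_map_filter_eq_ite (fun p => g ω i p.1 = g ω i x) (l.filter fun p => ¬(p.1 = x))]
        rw [← sum_ofReal_map (l.filter fun p => ¬(p.1 = x))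
          (fun p => if g ω i p.1 = g ω i x then p.2 else 0)
          (fun p hp => by
            have h2 := (hl'' p hp).2
            by_cases hc : g ω i p.1 = g ω i x <;> simp [hc, h2])]
        rw [hfs, List.map_map]
        refine congrArg List.sum (List.map_congr_left ?_)
        intro p _
        by_cases hc : g ω i p.1 = g ω i x
        · simp only [Function.comp_apply, Set.indicator_apply, Set.mem_setOf_eq, hc, if_true]
        · simp only [Function.comp_apply, Set.indicator_apply, Set.mem_setOf_eq, hc, if_false,
            ENNReal.ofReal_zero]
      have hmar := mul_meas_ge_le_lintegral₀ hZaem tE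
      have hfin : ENNReal.ofReal S * ((w:ℕ):ℝ≥0∞)⁻¹ = tE * 2⁻¹ := by
        have hwinv : ((w:ℕ):ℝ≥0∞)⁻¹ = ENNReal.ofReal (ε / 2) := by
          rw [← hw1]
          congr 1
          rw [hwε]
          field_simp
        have h2inv : (2:ℝ≥0∞)⁻¹ = ENNReal.ofReal (1 / 2) := by
          rw [one_div, ENNReal.ofReal_inv_of_pos (by norm_num), ENNReal.ofReal_ofNat]
        rw [hwinv, h2inv, htE, ← ENNReal.ofReal_mul hS0,
          ← ENNReal.ofReal_mul (by positivity : (0:ℝ) ≤ ε * S)]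
        congr 1
        ring
      have hhalf : μ {ω | tE ≤ (fs.map fun f => f ω).sum} ≤ 2⁻¹ := by
        have hle : tE * μ {ω | tE ≤ (fs.map fun f => f ω).sum} ≤ tE * 2⁻¹ :=
          le_trans hmar (le_trans hZint (le_of_eq hfin))
        exact (ENNReal.mul_le_mul_iff_right htE0 ENNReal.ofReal_ne_top).mp hle
      refine le_trans (measure_mono ?_) hhalf
      intro ω hω
      have hω' : flowSum x l + ε * S / 2 < rowEst k0 x l (g ω i) := hω
      have hd := detbound (g ω i)
      show tE ≤ (fs.map fun f => f ω).sum
      rw [hZeq ω, htE]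
      refine ENNReal.ofReal_le_ofReal ?_
      linarith
    -- independence across rows
    have hmeasH : ∀ i : Fin r, i ∈ Finset.univ → MeasurableSet
        {h : Fin n → Fin w | flowSum x l + ε * S / 2 < rowEst k0 x l h} :=
      fun i _ => measurableSet_all _
    have hind := hrows.measure_inter_preimage_eq_mul Finset.univ hmeasH
    have hTc : Tᶜ ⊆ ⋂ i ∈ Finset.univ, (fun i (ω : Ω) => g ω i) i ⁻¹'
        {h : Fin n → Fin w | flowSum x l + ε * S / 2 < rowEst k0 x l h} := by
      intro ω hω
      simp only [hT, Set.mem_compl_iff, Set.mem_setOf_eq, not_le] at hω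
      rw [Finset.lt_inf'_iff] at hω
      refine Set.mem_iInter₂.mpr ?_
      intro i _
      exact hω i (Finset.mem_univ i)
    have hTcle : μ Tᶜ ≤ (2⁻¹:ℝ≥0∞) ^ r := by
      refine le_trans (measure_mono hTc) ?_
      rw [hind]
      calc ∏ i : Fin r, μ ((fun i (ω : Ω) => g ω i) i ⁻¹'
            {h : Fin n → Fin w | flowSum x l + ε * S / 2 < rowEst k0 x l h})
          ≤ ∏ _i : Fin r, (2⁻¹:ℝ≥0∞) := Finset.prod_le_prod' fun i _ => key i
        _ = (2⁻¹:ℝ≥0∞) ^ r := by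
            rw [Finset.prod_const, Finset.card_univ, Fintype.card_fin]
    have huniv : (1:ℝ≥0∞) ≤ μ T + μ Tᶜ := by
      calc (1:ℝ≥0∞) = μ Set.univ := measure_univ.symm
        _ = μ (T ∪ Tᶜ) := by rw [Set.union_compl_self]
        _ ≤ μ T + μ Tᶜ := measure_union_le _ _
    have hofr : ENNReal.ofReal (1 - δ) ≤ 1 - (2⁻¹:ℝ≥0∞) ^ r := by
      rw [hδ, ENNReal.ofReal_sub _ (by positivity)]
      have h1 : ENNReal.ofReal 1 = 1 := ENNReal.ofReal_one
      have h2 : ENNReal.ofReal ((1/2:ℝ) ^ r) = (2⁻¹:ℝ≥0∞) ^ r := by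
        rw [ENNReal.ofReal_pow (by norm_num : (0:ℝ) ≤ 1/2)]
        congr 1
        rw [one_div, ENNReal.ofReal_inv_of_pos (by norm_num), ENNReal.ofReal_ofNat]
      rw [h1, h2]
    refine le_trans hofr ?_
    rw [tsub_le_iff_right]
    exact le_trans huniv (add_le_add_right hTcle _)
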